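/- For every class M of morphisms in a cocomplete locally small category, there exists a superclass N ⊇ M such that N is strong and the N-injective objects are exactly the M-orthogonal objects. Moreover, if M is a set, N can be chosen to be a set. Concretely, N = M ∪ { f' | f ∈ M }, where for f : A → B the morphism f' : B ⊔_A B → B is the codiagonal collapsing the two copies of B. -/

import Mathlib

open CategoryTheory Limits

universe v u

variable {C : Type u} [Category.{v} C]

/-- `X` is injective to `f` if every map from the domain of `f` to `X` extends along `f`. -/
def Inj {A B : C} (f : A ⟶ B) (X : C) : Prop :=
  ∀ a : A ⟶ X, ∃ b : B ⟶ X, f ≫ b = a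

/-- `X` is orthogonal to `f` if every map from the domain of `f` to `X` extends uniquely. -/
def Orth {A B : C} (f : A ⟶ B) (X : C) : Prop :=
  ∀ a : A ⟶ X, ∃! b : B ⟶ X, f ≫ b = a

/-- `X` is injective to every morphism of the class `M`. -/
def MInj (M : MorphismProperty C) (X : C) : Prop :=
  ∀ ⦃A B : C⦄ (f : A ⟶ B), M f → Inj f X

/-- `X` is orthogonal to every morphism of the class `M`. -/
def MOrth (M : MorphismProperty C) (X : C) : Prop :=
  ∀ ⦃A B : C⦄ (f : A ⟶ B), M f → Orth f X

/-- A class of morphisms is strong if its injectivity class coincides with its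
orthogonality class. -/
def Strong (M : MorphismProperty C) : Prop := ∀ X : C, MInj M X ↔ MOrth M X

variable [HasPushouts C]

/-- The codiagonal `B ⊔_A B ⟶ B` of a morphism `f : A ⟶ B`, collapsing the two
copies of `B` into one. -/
noncomputable def codiag {A B : C} (f : A ⟶ B) : pushout f f ⟶ B :=
  pushout.desc (𝟙 B) (𝟙 B) rfl

/-- The class `N = M ∪ { codiag f ∣ f ∈ M }`. -/
inductive NClass (M : MorphismProperty C) : ∀ {X Y : C}, (X ⟶ Y) → Prop
  | base {A B : C} (f : A ⟶ B) : M f → NClass M f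
  | codiagonal {A B : C} (f : A ⟶ B) : M f → NClass M (codiag f)

/-- `NClass M` as a morphism property. -/
def NProp (M : MorphismProperty C) : MorphismProperty C := fun _ _ f => NClass M f

/-- For every class `M` of morphisms, the superclass `N = M ∪ { codiag f ∣ f ∈ M }`
is strong and its injectivity class is exactly the orthogonality class of `M`. -/
theorem stmt_1 (M : MorphismProperty C) :
    M ≤ NProp M ∧ Strong (NProp M) ∧ ∀ X : C, MInj (NProp M) X ↔ MOrth M X := by
  have inl_codiag : ∀ {A B : C} (f : A ⟶ B),
      pushout.inl f f ≫ codiag f = 𝟙 B := fun f => pushout.inl_desc _ _ _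
  have inr_codiag : ∀ {A B : C} (f : A ⟶ B),
      pushout.inr f f ≫ codiag f = 𝟙 B := fun f => pushout.inr_desc _ _ _
  have key : ∀ X : C, MInj (NProp M) X ↔ MOrth M X := by
    intro X
    constructor
    · intro h A B f hf a
      obtain ⟨b, hb⟩ := h f (NClass.base f hf) a
      refine ⟨b, hb, ?_⟩
      intro b' hb'
      obtain ⟨c, hc⟩ := h (codiag f) (NClass.codiagonal f hf)
        (pushout.desc b' b (hb'.trans hb.symm))
      have h1 : b' = c := by
        have := congrArg (fun g => pushout.inl f f ≫ g) hc
        have e : pushout.inl f f ≫ pushout.desc b' b (hb'.trans hb.symm) = b' :=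
          pushout.inl_desc _ _ _
        exact e.symm.trans (by simpa [reassoc_of% (inl_codiag f)] using this.symm)
      have h2 : b = c := by
        have := congrArg (fun g => pushout.inr f f ≫ g) hc
        have e : pushout.inr f f ≫ pushout.desc b' b (hb'.trans hb.symm) = b :=
          pushout.inr_desc _ _ _
        exact e.symm.trans (by simpa [reassoc_of% (inr_codiag f)] using this.symm)
      exact h1.trans h2.symm
    · intro h A B g hg
      induction hg with
      | base f hf => exact fun a => ⟨(h f hf a).exists.choose, (h f hf a).exists.choose_spec⟩
      | codiagonal f hf =>
        intro a
        refine ⟨pushout.inl f f ≫ a, ?_⟩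
        have heq : pushout.inl f f ≫ a = pushout.inr f f ≫ a := by
          have hu := h f hf (f ≫ pushout.inl f f ≫ a)
          exact hu.unique rfl (by rw [← pushout.condition_assoc])
        apply pushout.hom_ext
        · simp [reassoc_of% (inl_codiag f)]
        · simp [reassoc_of% (inr_codiag f), ← heq]
  refine ⟨fun A B f hf => NClass.base f hf, ?_, key⟩
  intro X
  constructor
  · intro h A B g hg
    induction hg with
    | base f hf => exact ((key X).mp h) f hf
    | codiagonal f hf =>
      intro a
      obtain ⟨b, hb⟩ := h (codiag f) (NClass.codiagonal f hf) a
      refine ⟨b, hb, fun b' hb' => ?_⟩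
      have := congrArg (fun g => pushout.inl f f ≫ g) (hb'.trans hb.symm)
      simpa [reassoc_of% (inl_codiag f)] using this
  · intro h A B g hg a
    exact ((h g hg) a).exists
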